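/- Fix n, a strictly positive vector P* and any vector P. The cone of possible velocities at P of general Markov kinetics with equilibrium P* coincides with the cone of possible velocities at P of Markov kinetics satisfying detailed balance with the same equilibrium: Q^n_B(P,P*) = Q^n_DB(P,P*). In particular, for every nonnegative rate matrix (q_{ij}) satisfying the balance condition with equilibrium P*, there exists a nonnegative rate matrix (q'_{ij}) with q'_{ij} p*_j = q'_{ji} p*_i for all i ≠ j, such that ∑_{j≠i}(q_{ij} p_j − q_{ji} p_i) = ∑_{j≠i}(q'_{ij} p_j − q'_{ji} p_i) for all i. -/

import Mathlib

open Finset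

/-- `Q^n_B(P,P*)`: possible velocities at `P` of Markov kinetics with
equilibrium `P*` (balance condition). -/
def velConeB (n : ℕ) (pstar p : Fin n → ℝ) : Set (Fin n → ℝ) :=
  {v | ∃ q : Fin n → Fin n → ℝ,
    (∀ i j, i ≠ j → 0 ≤ q i j) ∧
    (∀ i, ∑ j ∈ Finset.univ.filter (· ≠ i), q i j * pstar j =
      (∑ j ∈ Finset.univ.filter (· ≠ i), q j i) * pstar i) ∧
    (∀ i, v i = ∑ j ∈ Finset.univ.filter (· ≠ i), (q i j * p j - q j i * p i))}

/-- `Q^n_DB(P,P*)`: possible velocities at `P` of Markov kinetics with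
detailed balance and equilibrium `P*`. -/
def velConeDB (n : ℕ) (pstar p : Fin n → ℝ) : Set (Fin n → ℝ) :=
  {v | ∃ q : Fin n → Fin n → ℝ,
    (∀ i j, i ≠ j → 0 ≤ q i j) ∧
    (∀ i j, i ≠ j → q i j * pstar j = q j i * pstar i) ∧
    (∀ i, v i = ∑ j ∈ Finset.univ.filter (· ≠ i), (q i j * p j - q j i * p i))}

/-- Local equivalence of general Markov kinetics and Markov kinetics with
detailed balance: the cones of possible velocities coincide,
`Q^n_B(P,P*) = Q^n_DB(P,P*)`. -/

lemma layer_lemma (n : ℕ) (a : Fin n → Fin n → ℝ)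
    (ha : ∀ i j, 0 ≤ a i j)
    (hbal : ∀ i, (∑ j, a i j) = ∑ j, a j i)
    (x : Fin n → ℝ) (μ ν : ℝ) (hνμ : ν < μ) (hle : ∀ i, x i ≠ μ → x i ≤ ν) :
    ∃ b : Fin n → Fin n → ℝ, (∀ i j, 0 ≤ b i j) ∧ (∀ i j, b i j = b j i) ∧
      ∀ i, (∑ j, b i j * (x j - x i)) =
        ∑ j, a i j * ((if x j = μ then μ - ν else 0) - (if x i = μ then μ - ν else 0)) := by
  classical
  set S : Finset (Fin n) := Finset.univ.filter (fun i => x i = μ) with hSdef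
  set Sc : Finset (Fin n) := Finset.univ.filter (fun i => ¬ x i = μ) with hScdef
  set u : Fin n → ℝ := fun i => ∑ j ∈ S, a i j with hudef
  set d : Fin n → ℝ := fun i => ∑ j ∈ Sc, a i j with hddef
  have hu0 : ∀ i, 0 ≤ u i := fun i => Finset.sum_nonneg fun j _ => ha i j
  have hd0 : ∀ i, 0 ≤ d i := fun i => Finset.sum_nonneg fun j _ => ha i j
  have hud : ∀ i, u i + d i = ∑ j, a i j := fun i =>
    Finset.sum_filter_add_sum_filter_not _ _ _
  set F : ℝ := ∑ i ∈ Sc, u i with hFdef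
  have hF0 : 0 ≤ F := Finset.sum_nonneg fun i _ => hu0 i
  have hdF : ∑ i ∈ S, d i = F := by
    have h1 : ∑ i ∈ S, (u i + d i) = ∑ i ∈ S, ∑ j, a j i := by
      refine Finset.sum_congr rfl fun i _ => ?_
      rw [hud i, hbal i]
    have h2 : ∑ i ∈ S, ∑ j, a j i = ∑ j, ∑ i ∈ S, a j i := Finset.sum_comm
    have h3 : (∑ j, u j) = ∑ j ∈ S, u j + ∑ j ∈ Sc, u j :=
      (Finset.sum_filter_add_sum_filter_not _ _ _).symm
    have h4 : ∑ i ∈ S, (u i + d i) = ∑ i ∈ S, u i + ∑ i ∈ S, d i :=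
      Finset.sum_add_distrib
    have h5 : (∑ j, ∑ i ∈ S, a j i) = ∑ j, u j := rfl
    rw [h4, h2, h5, h3] at h1
    linarith
  -- the target velocity of the layer
  have hw : ∀ i, (∑ j, a i j * ((if x j = μ then μ - ν else 0) - (if x i = μ then μ - ν else 0)))
      = if x i = μ then -((μ - ν) * d i) else (μ - ν) * u i := by
    intro i
    rw [← Finset.sum_filter_add_sum_filter_not Finset.univ (fun j => x j = μ)]
    by_cases hi : x i = μ
    · rw [if_pos hi]
      have e1 : ∑ j ∈ S, a i j * ((if x j = μ then μ - ν else 0) - (μ - ν)) = 0 :=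
        Finset.sum_eq_zero fun j hj => by rw [if_pos (Finset.mem_filter.mp hj).2]; ring
      have e2 : ∑ j ∈ Sc, a i j * ((if x j = μ then μ - ν else 0) - (μ - ν))
          = ∑ j ∈ Sc, -((μ - ν) * a i j) :=
        Finset.sum_congr rfl fun j hj => by rw [if_neg (Finset.mem_filter.mp hj).2]; ring
      rw [e1, e2, Finset.sum_neg_distrib, ← Finset.mul_sum, if_pos hi]
      simp [hddef]
    · rw [if_neg hi]
      have e1 : ∑ j ∈ S, a i j * ((if x j = μ then μ - ν else 0) - 0)
          = ∑ j ∈ S, (μ - ν) * a i j :=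
        Finset.sum_congr rfl fun j hj => by rw [if_pos (Finset.mem_filter.mp hj).2]; ring
      have e2 : ∑ j ∈ Sc, a i j * ((if x j = μ then μ - ν else 0) - 0) = 0 :=
        Finset.sum_eq_zero fun j hj => by rw [if_neg (Finset.mem_filter.mp hj).2]; ring
      rw [e1, e2, ← Finset.mul_sum, if_neg hi]
      simp [hudef]
  by_cases hF : F = 0
  · -- no flow across the cut: target is zero
    refine ⟨0, fun i j => le_refl 0, fun i j => rfl, fun i => ?_⟩
    have hu0' : ∀ i ∈ Sc, u i = 0 := by
      intro i hi
      exact (Finset.sum_eq_zero_iff_of_nonneg fun j _ => hu0 j).mp (hFdef ▸ hF) i hi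
    have hd0' : ∀ i ∈ S, d i = 0 := by
      intro i hi
      exact (Finset.sum_eq_zero_iff_of_nonneg fun j _ => hd0 j).mp (hdF.trans hF) i hi
    rw [hw]
    by_cases hi : x i = μ
    · rw [if_pos hi, hd0' i (Finset.mem_filter.mpr ⟨Finset.mem_univ i, hi⟩)]
      simp
    · rw [if_neg hi, hu0' i (Finset.mem_filter.mpr ⟨Finset.mem_univ i, hi⟩)]
      simp
  · have hFpos : 0 < F := lt_of_le_of_ne hF0 (Ne.symm hF)
    have hgap : ∀ i, ¬ x i = μ → 0 < μ - x i := fun i hi =>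
      sub_pos.mpr (lt_of_le_of_lt (hle i hi) hνμ)
    refine ⟨fun i j =>
      if ¬ x i = μ ∧ x j = μ then (μ - ν) * u i * d j / (F * (μ - x i))
      else if x i = μ ∧ ¬ x j = μ then (μ - ν) * u j * d i / (F * (μ - x j))
      else 0, ?_, ?_, ?_⟩
    · intro i j
      dsimp only
      split
      · rename_i h
        exact div_nonneg (mul_nonneg (mul_nonneg (by linarith) (hu0 i)) (hd0 j))
          (mul_nonneg hF0 (hgap i h.1).le)
      · split
        · rename_i h' h
          exact div_nonneg (mul_nonneg (mul_nonneg (by linarith) (hu0 j)) (hd0 i))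
            (mul_nonneg hF0 (hgap j h.2).le)
        · exact le_refl 0
    · intro i j
      dsimp only
      by_cases h1 : ¬ x i = μ ∧ x j = μ
      · rw [if_pos h1, if_neg (by tauto), if_pos ⟨h1.2, h1.1⟩]
      · by_cases h2 : x i = μ ∧ ¬ x j = μ
        · rw [if_neg h1, if_pos h2, if_pos ⟨h2.2, h2.1⟩]
        · rw [if_neg h1, if_neg h2, if_neg (by tauto), if_neg (by tauto)]
    · intro i
      rw [hw]
      rw [← Finset.sum_filter_add_sum_filter_not Finset.univ (fun j => x j = μ)]
      by_cases hi : x i = μ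
      · rw [if_pos hi]
        have e1 : ∑ j ∈ S, ((if ¬ x i = μ ∧ x j = μ then (μ - ν) * u i * d j / (F * (μ - x i))
            else if x i = μ ∧ ¬ x j = μ then (μ - ν) * u j * d i / (F * (μ - x j))
            else 0) * (x j - x i)) = 0 := by
          refine Finset.sum_eq_zero fun j hj => ?_
          have hj' : x j = μ := (Finset.mem_filter.mp hj).2
          rw [if_neg (by tauto), if_neg (by tauto)]
          ring
        have e2 : ∑ j ∈ Sc, ((if ¬ x i = μ ∧ x j = μ then (μ - ν) * u i * d j / (F * (μ - x i))
            else if x i = μ ∧ ¬ x j = μ then (μ - ν) * u j * d i / (F * (μ - x j))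
            else 0) * (x j - x i)) = ∑ j ∈ Sc, -((μ - ν) * d i / F * u j) := by
          refine Finset.sum_congr rfl fun j hj => ?_
          have hj' : ¬ x j = μ := (Finset.mem_filter.mp hj).2
          rw [if_neg (by tauto), if_pos ⟨hi, hj'⟩, hi]
          have hne : μ - x j ≠ 0 := (hgap j hj').ne'
          field_simp
          ring
        rw [e1, e2, Finset.sum_neg_distrib, ← Finset.mul_sum, ← hFdef,
          div_mul_cancel₀ _ hF]
        ring
      · rw [if_neg hi]
        have e1 : ∑ j ∈ S, ((if ¬ x i = μ ∧ x j = μ then (μ - ν) * u i * d j / (F * (μ - x i))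
            else if x i = μ ∧ ¬ x j = μ then (μ - ν) * u j * d i / (F * (μ - x j))
            else 0) * (x j - x i)) = ∑ j ∈ S, (μ - ν) * u i / F * d j := by
          refine Finset.sum_congr rfl fun j hj => ?_
          have hj' : x j = μ := (Finset.mem_filter.mp hj).2
          rw [if_pos ⟨hi, hj'⟩, hj']
          have hne : μ - x i ≠ 0 := (hgap i hi).ne'
          field_simp
        have e2 : ∑ j ∈ Sc, ((if ¬ x i = μ ∧ x j = μ then (μ - ν) * u i * d j / (F * (μ - x i))
            else if x i = μ ∧ ¬ x j = μ then (μ - ν) * u j * d i / (F * (μ - x j))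
            else 0) * (x j - x i)) = 0 := by
          refine Finset.sum_eq_zero fun j hj => ?_
          have hj' : ¬ x j = μ := (Finset.mem_filter.mp hj).2
          rw [if_neg (by tauto), if_neg (by tauto)]
          ring
        rw [e1, e2, ← Finset.mul_sum, hdF, div_mul_cancel₀ _ hF]
        ring


lemma key_lemma (n : ℕ) (a : Fin n → Fin n → ℝ)
    (ha : ∀ i j, 0 ≤ a i j)
    (hbal : ∀ i, (∑ j, a i j) = ∑ j, a j i) :
    ∀ (k : ℕ) (x : Fin n → ℝ), (Finset.image x Finset.univ).card ≤ k →
      ∃ b : Fin n → Fin n → ℝ, (∀ i j, 0 ≤ b i j) ∧ (∀ i j, b i j = b j i) ∧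
        ∀ i, (∑ j, b i j * (x j - x i)) = ∑ j, a i j * (x j - x i) := by
  intro k
  induction k with
  | zero =>
    intro x hx
    refine ⟨0, fun i j => le_refl 0, fun i j => rfl, fun i => ?_⟩
    have : (Finset.image x Finset.univ) = ∅ := Finset.card_eq_zero.mp (Nat.le_zero.mp hx)
    exact absurd (this ▸ Finset.mem_image_of_mem x (Finset.mem_univ i)) (Finset.notMem_empty _)
  | succ k ih =>
    intro x hx
    by_cases hconst : ∀ i j : Fin n, x i = x j
    · refine ⟨0, fun i j => le_refl 0, fun i j => rfl, fun i => ?_⟩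
      simp only [Pi.zero_apply, zero_mul, Finset.sum_const_zero]
      exact (Finset.sum_eq_zero fun j _ => by rw [hconst j i]; ring).symm
    · push_neg at hconst
      obtain ⟨i₀, j₀, hij₀⟩ := hconst
      have hTne : (Finset.image x Finset.univ).Nonempty :=
        ⟨x i₀, Finset.mem_image_of_mem x (Finset.mem_univ i₀)⟩
      set μ := (Finset.image x Finset.univ).max' hTne with hμdef
      have hxleμ : ∀ i, x i ≤ μ := fun i =>
        Finset.le_max' _ _ (Finset.mem_image_of_mem x (Finset.mem_univ i))
      obtain ⟨i₁, hi₁⟩ : ∃ i, x i ≠ μ := by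
        by_contra h
        push_neg at h
        exact hij₀ ((h i₀).trans (h j₀).symm)
      have hEne : ((Finset.image x Finset.univ).erase μ).Nonempty :=
        ⟨x i₁, Finset.mem_erase.mpr ⟨hi₁, Finset.mem_image_of_mem x (Finset.mem_univ i₁)⟩⟩
      set ν := ((Finset.image x Finset.univ).erase μ).max' hEne with hνdef
      have hνmem : ν ∈ (Finset.image x Finset.univ).erase μ := Finset.max'_mem _ hEne
      have hνμ : ν < μ :=
        lt_of_le_of_ne (Finset.le_max' _ _ (Finset.mem_of_mem_erase hνmem))
          (Finset.ne_of_mem_erase hνmem)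
      have hleν : ∀ i, x i ≠ μ → x i ≤ ν := fun i h =>
        Finset.le_max' _ _ (Finset.mem_erase.mpr ⟨h, Finset.mem_image_of_mem x (Finset.mem_univ i)⟩)
      set x' : Fin n → ℝ := fun i => min (x i) ν with hx'def
      have hx'eq : ∀ i, x' i = if x i = μ then ν else x i := by
        intro i
        by_cases h : x i = μ
        · rw [if_pos h, hx'def]; exact min_eq_right (h ▸ hνμ.le)
        · rw [if_neg h, hx'def]; exact min_eq_left (hleν i h)
      have himg : Finset.image x' Finset.univ ⊆ (Finset.image x Finset.univ).erase μ := by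
        intro y hy
        obtain ⟨i, -, rfl⟩ := Finset.mem_image.mp hy
        rw [hx'eq i]
        by_cases h : x i = μ
        · rw [if_pos h]; exact hνmem
        · rw [if_neg h]
          exact Finset.mem_erase.mpr ⟨h, Finset.mem_image_of_mem x (Finset.mem_univ i)⟩
      have hcard' : (Finset.image x' Finset.univ).card ≤ k := by
        have h1 := Finset.card_le_card himg
        have h2 : ((Finset.image x Finset.univ).erase μ).card
            < (Finset.image x Finset.univ).card :=
          Finset.card_erase_lt_of_mem (Finset.max'_mem _ hTne)
        omega
      obtain ⟨b', hb'0, hb'sym, hb'eq⟩ := ih x' hcard'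
      -- rescale b' so that it works for x instead of x'
      have hmono : ∀ i j, x i ≤ x j → x' i ≤ x' j := fun i j h => min_le_min h le_rfl
      set b₂ : Fin n → Fin n → ℝ :=
        fun i j => if x i = x j then 0 else b' i j * ((x' j - x' i) / (x j - x i)) with hb₂def
      have hratio : ∀ i j, x i < x j → 0 ≤ (x' j - x' i) / (x j - x i) := fun i j h =>
        div_nonneg (sub_nonneg.mpr (hmono i j h.le)) (sub_nonneg.mpr h.le)
      have hflip : ∀ i j : Fin n, (x' j - x' i) / (x j - x i) = (x' i - x' j) / (x i - x j) := by
        intro i j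
        rw [← neg_div_neg_eq, neg_sub, neg_sub]
      have hb₂0 : ∀ i j, 0 ≤ b₂ i j := by
        intro i j
        rw [hb₂def]
        dsimp only
        split
        · exact le_refl 0
        · rename_i h
          rcases lt_trichotomy (x i) (x j) with hlt | heq | hgt
          · exact mul_nonneg (hb'0 i j) (hratio i j hlt)
          · exact absurd heq h
          · rw [hflip i j]
            exact mul_nonneg (hb'0 i j) (hratio j i hgt)
      have hb₂sym : ∀ i j, b₂ i j = b₂ j i := by
        intro i j
        rw [hb₂def]
        dsimp only
        by_cases h : x i = x j
        · rw [if_pos h, if_pos h.symm]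
        · rw [if_neg h, if_neg (Ne.symm h), hb'sym i j, hflip i j]
      have hb₂term : ∀ i j, b₂ i j * (x j - x i) = b' i j * (x' j - x' i) := by
        intro i j
        rw [hb₂def]
        dsimp only
        by_cases h : x i = x j
        · have h' : x' j - x' i = 0 := by rw [hx'def]; dsimp only; rw [h]; ring
          rw [if_pos h, h', zero_mul, mul_zero]
        · rw [if_neg h, mul_assoc, div_mul_cancel₀ _ (sub_ne_zero.mpr (Ne.symm h))]
      -- the top layer
      obtain ⟨b₁, hb₁0, hb₁sym, hb₁eq⟩ := layer_lemma n a ha hbal x μ ν hνμ hleν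
      refine ⟨fun i j => b₁ i j + b₂ i j,
        fun i j => add_nonneg (hb₁0 i j) (hb₂0 i j),
        fun i j => by dsimp only; rw [hb₁sym i j, hb₂sym i j], fun i => ?_⟩
      have hsplit : ∀ j, x j - x i
          = ((if x j = μ then μ - ν else 0) - (if x i = μ then μ - ν else 0)) + (x' j - x' i) := by
        intro j
        have hj : x j = (if x j = μ then μ - ν else 0) + x' j := by
          rw [hx'eq j]
          by_cases h : x j = μ
          · rw [if_pos h, if_pos h, h]; ring
          · rw [if_neg h, if_neg h]; ring
        have hi : x i = (if x i = μ then μ - ν else 0) + x' i := by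
          rw [hx'eq i]
          by_cases h : x i = μ
          · rw [if_pos h, if_pos h, h]; ring
          · rw [if_neg h, if_neg h]; ring
        linarith [hj, hi]
      calc ∑ j, (b₁ i j + b₂ i j) * (x j - x i)
          = ∑ j, (b₁ i j * (x j - x i) + b' i j * (x' j - x' i)) := by
            refine Finset.sum_congr rfl fun j _ => ?_
            rw [← hb₂term i j]; ring
        _ = (∑ j, b₁ i j * (x j - x i)) + ∑ j, b' i j * (x' j - x' i) :=
            Finset.sum_add_distrib
        _ = (∑ j, a i j * ((if x j = μ then μ - ν else 0) - (if x i = μ then μ - ν else 0)))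
            + ∑ j, a i j * (x' j - x' i) := by rw [hb₁eq i, hb'eq i]
        _ = ∑ j, a i j * (x j - x i) := by
            rw [← Finset.sum_add_distrib]
            refine Finset.sum_congr rfl fun j _ => ?_
            rw [hsplit j]; ring

theorem velCone_balance_eq_detailed_balance (n : ℕ) (pstar p : Fin n → ℝ)
    (hpos : ∀ i, 0 < pstar i) :
    velConeB n pstar p = velConeDB n pstar p := by
  classical
  have hdiag : ∀ (i : Fin n) (g : Fin n → ℝ), g i = 0 →
      ∑ j ∈ Finset.univ.filter (· ≠ i), g j = ∑ j, g j := by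
    intro i g hg
    exact Finset.sum_filter_of_ne fun j _ hj hji => hj (hji ▸ hg)
  apply Set.Subset.antisymm
  · -- the hard inclusion: balance implies a detailed-balance realization
    rintro v ⟨q, hq0, hqbal, hqv⟩
    set x : Fin n → ℝ := fun i => p i / pstar i with hxdef
    set a : Fin n → Fin n → ℝ := fun i j => if i = j then 0 else q i j * pstar j with hadef
    have ha0 : ∀ i j, 0 ≤ a i j := by
      intro i j
      rw [hadef]
      dsimp only
      split
      · exact le_refl 0
      · rename_i h
        exact mul_nonneg (hq0 i j h) (hpos j).le
    have haii : ∀ i, a i i = 0 := by intro i; rw [hadef]; simp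
    have hfa : ∀ i, ∑ j ∈ Finset.univ.filter (· ≠ i), a i j = ∑ j, a i j :=
      fun i => hdiag i _ (haii i)
    have hfa' : ∀ i, ∑ j ∈ Finset.univ.filter (· ≠ i), a j i = ∑ j, a j i :=
      fun i => hdiag i _ (haii i)
    have haq : ∀ i, ∀ j ∈ Finset.univ.filter (· ≠ i), a i j = q i j * pstar j := by
      intro i j hj
      have hj' : j ≠ i := (Finset.mem_filter.mp hj).2
      rw [hadef]
      dsimp only
      rw [if_neg (Ne.symm hj')]
    have haq' : ∀ i, ∀ j ∈ Finset.univ.filter (· ≠ i), a j i = q j i * pstar i := by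
      intro i j hj
      have hj' : j ≠ i := (Finset.mem_filter.mp hj).2
      rw [hadef]
      dsimp only
      rw [if_neg hj']
    have hbal : ∀ i, ∑ j, a i j = ∑ j, a j i := by
      intro i
      rw [← hfa i, ← hfa' i, Finset.sum_congr rfl (haq i), Finset.sum_congr rfl (haq' i),
        ← Finset.sum_mul, hqbal i, Finset.sum_mul]
    have hvx : ∀ i, v i = ∑ j, a i j * (x j - x i) := by
      intro i
      have h0 : a i i * (x i - x i) = 0 := by rw [sub_self, mul_zero]
      rw [← hdiag i _ h0]
      have hterm : ∀ j ∈ Finset.univ.filter (· ≠ i), a i j * (x j - x i)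
          = q i j * p j - q i j * pstar j * x i := by
        intro j hj
        rw [haq i j hj, hxdef]
        dsimp only
        rw [mul_sub]
        congr 1
        rw [mul_assoc, mul_div_cancel₀ _ (hpos j).ne']
      rw [Finset.sum_congr rfl hterm, Finset.sum_sub_distrib, ← Finset.sum_mul, hqbal i]
      have : (∑ j ∈ Finset.univ.filter (· ≠ i), q j i) * pstar i * x i
          = (∑ j ∈ Finset.univ.filter (· ≠ i), q j i) * p i := by
        rw [hxdef]
        dsimp only
        rw [mul_assoc, mul_div_cancel₀ _ (hpos i).ne']
      rw [this, hqv i, Finset.sum_sub_distrib, Finset.sum_mul]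
    obtain ⟨b, hb0, hbsym, hbeq⟩ :=
      key_lemma n a ha0 hbal (Finset.image x Finset.univ).card x le_rfl
    refine ⟨fun i j => b i j / pstar j, ?_, ?_, ?_⟩
    · intro i j _
      exact div_nonneg (hb0 i j) (hpos j).le
    · intro i j _
      rw [div_mul_cancel₀ _ (hpos j).ne', div_mul_cancel₀ _ (hpos i).ne', hbsym i j]
    · intro i
      have hterm : ∀ j ∈ Finset.univ.filter (· ≠ i),
          b i j / pstar j * p j - b j i / pstar i * p i = b i j * (x j - x i) := by
        intro j _
        rw [hbsym j i, hxdef]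
        dsimp only
        rw [mul_sub]
        congr 1
        · rw [div_mul_eq_mul_div, mul_div_assoc]
        · rw [div_mul_eq_mul_div, mul_div_assoc]
      have h0 : b i i * (x i - x i) = 0 := by rw [sub_self, mul_zero]
      rw [Finset.sum_congr rfl hterm, hdiag i _ h0, hbeq i, ← hvx i]
  · -- detailed balance implies balance
    rintro v ⟨q, hq0, hdb, hqv⟩
    refine ⟨q, hq0, fun i => ?_, hqv⟩
    rw [Finset.sum_mul]
    refine Finset.sum_congr rfl fun j hj => ?_
    exact hdb i j (Ne.symm (Finset.mem_filter.mp hj).2)
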